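/- Let A = A_s + A_d ε be a dual tensor of order m and dimension n, λ = λ_s + λ_d ε a dual number, and x = x_s + x_d ε a dual vector. Then A x^{m−1} = λ x^{[m−1]} holds (as dual vectors) if and only if A_s x_s^{m−1} = λ_s x_s^{[m−1]} and M x_d = (A_d − λ_d I) x_s^{m−1}, where M = (m−1) λ_s diag(x_s)^{m−2} − Σ_{k=2}^m A^{(k)} with (A^{(k)})_{ij} = Σ (A_s)_{i i₂…i_{k−1} j i_{k+1}…i_m} ∏_{l≠1,k} (x_s)_{i_l}. -/

import Mathlib

open Matrix

/-- For an order (q+2), dimension n tensor `T` over a commutative (semi)ring and a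
vector `x`, `tapply T x i = (T x^{m-1})_i = ∑ a_{i i₂ … i_m} x_{i₂} ⋯ x_{i_m}`. -/
def tapply {R : Type*} [CommSemiring R] {n q : ℕ}
    (T : (Fin (q + 2) → Fin n) → R) (x : Fin n → R) (i : Fin n) : R :=
  ∑ g : Fin (q + 1) → Fin n, T (Fin.cons i g) * ∏ l, x (g l)

/-- The matrix A^{(k)} of Theorem 3.1 (k indexed by the m−1 tail positions):
(A^{(k)})_{ij} = ∑_{i₂,…,i_m, i_k = j} a_{i i₂ … i_m} ∏_{l ∉ {1,k}} x_{i_l}. -/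
def Ak {n q : ℕ} (T : (Fin (q + 2) → Fin n) → ℝ) (x : Fin n → ℝ)
    (k : Fin (q + 1)) : Matrix (Fin n) (Fin n) ℝ :=
  Matrix.of fun i j =>
    ∑ g ∈ Finset.univ.filter (fun g : Fin (q + 1) → Fin n => g k = j),
      T (Fin.cons i g) * ∏ l ∈ Finset.univ.erase k, x (g l)

/-- The matrix M = (m−1) λ_s diag(x_s)^{m−2} − ∑_{k=2}^m A^{(k)} of Theorem 3.1
(order m = q+2). -/
noncomputable def Mmat {n q : ℕ} (T : (Fin (q + 2) → Fin n) → ℝ) (x : Fin n → ℝ)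
    (ls : ℝ) : Matrix (Fin n) (Fin n) ℝ :=
  ((q : ℝ) + 1) • ls • (Matrix.diagonal x) ^ q - ∑ k : Fin (q + 1), Ak T x k

/-- A tensor is weakly irreducible if its associated digraph, with an arc (i,j)
whenever some entry a_{i i₂ … i_m} ≠ 0 with j among i₂,…,i_m, is strongly
connected. -/
def WeaklyIrreducible {n q : ℕ} (T : (Fin (q + 2) → Fin n) → ℝ) : Prop :=
  ∀ i j : Fin n, Relation.ReflTransGen
    (fun a b => ∃ g : Fin (q + 1) → Fin n, T (Fin.cons a g) ≠ 0 ∧ ∃ l, g l = b) i j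
open TrivSqZeroExt

lemma dual_mul (a b c d : ℝ) :
    ((inl a + inr b) * (inl c + inr d) : DualNumber ℝ)
      = inl (a * c) + inr (a * d + c * b) := by
  rw [add_mul, mul_add, mul_add, inl_mul_inl, inl_mul_inr, inr_mul_inl, inr_mul_inr]
  simp only [op_smul_eq_smul, smul_eq_mul, add_zero, ← inr_add]
  rw [add_assoc, ← inr_add]

lemma dual_eq (a b c d : ℝ) :
    ((inl a + inr b : DualNumber ℝ) = inl c + inr d) ↔ (a = c ∧ b = d) := by
  constructor
  · intro h
    exact ⟨by simpa using congrArg fst h, by simpa using congrArg snd h⟩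
  · rintro ⟨rfl, rfl⟩; rfl

lemma dual_prod {ι : Type*} [DecidableEq ι] (s : Finset ι) (a b : ι → ℝ) :
    (∏ l ∈ s, (inl (a l) + inr (b l) : DualNumber ℝ))
      = inl (∏ l ∈ s, a l)
        + inr (∑ k ∈ s, b k * ∏ l ∈ s.erase k, a l) := by
  induction s using Finset.induction_on with
  | empty => simp
  | insert x s hx ih =>
    rw [Finset.prod_insert hx, ih, dual_mul, Finset.sum_insert hx, Finset.erase_insert hx,
      Finset.prod_insert hx]
    congr 2
    rw [Finset.mul_sum]
    rw [show (∏ l ∈ s, a l) * b x = b x * ∏ l ∈ s, a l from mul_comm _ _, add_comm]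
    congr 1
    refine Finset.sum_congr rfl fun k hk => ?_
    rw [Finset.erase_insert_of_ne (by rintro rfl; exact hx hk),
      Finset.prod_insert (fun h => hx (Finset.mem_of_mem_erase h))]
    ring

lemma dual_pow (c d : ℝ) (m : ℕ) :
    ((inl c + inr d : DualNumber ℝ)) ^ (m + 1)
      = inl (c ^ (m + 1)) + inr (((m : ℝ) + 1) * c ^ m * d) := by
  induction m with
  | zero => norm_num
  | succ m ih =>
    rw [pow_succ, ih, dual_mul]
    refine (dual_eq _ _ _ _).mpr ⟨by ring, by push_cast; ring⟩

lemma Ak_mulVec {n q : ℕ} (Ts : (Fin (q + 2) → Fin n) → ℝ) (xs xd : Fin n → ℝ)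
    (k : Fin (q + 1)) (i : Fin n) :
    (Ak Ts xs k).mulVec xd i
      = ∑ g : Fin (q + 1) → Fin n,
          Ts (Fin.cons i g) * (xd (g k) * ∏ l ∈ Finset.univ.erase k, xs (g l)) := by
  simp only [Matrix.mulVec, dotProduct, Ak, Matrix.of_apply]
  have h1 : ∀ j : Fin n,
      (∑ g ∈ Finset.univ.filter (fun g : Fin (q + 1) → Fin n => g k = j),
          Ts (Fin.cons i g) * ∏ l ∈ Finset.univ.erase k, xs (g l)) * xd j
        = ∑ g ∈ Finset.univ.filter (fun g : Fin (q + 1) → Fin n => g k = j),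
            Ts (Fin.cons i g) * (xd (g k) * ∏ l ∈ Finset.univ.erase k, xs (g l)) := by
    intro j
    rw [Finset.sum_mul]
    refine Finset.sum_congr rfl fun g hg => ?_
    rw [(Finset.mem_filter.mp hg).2]
    ring
  simp_rw [h1, Finset.sum_filter]
  rw [Finset.sum_comm]
  refine Finset.sum_congr rfl fun g _ => ?_
  simp

lemma Mmat_mulVec {n q : ℕ} (Ts : (Fin (q + 2) → Fin n) → ℝ) (ls : ℝ)
    (xs xd : Fin n → ℝ) (i : Fin n) :
    (Mmat Ts xs ls).mulVec xd i
      = ((q : ℝ) + 1) * ls * xs i ^ q * xd i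
        - ∑ g : Fin (q + 1) → Fin n,
            Ts (Fin.cons i g) * ∑ k, xd (g k) * ∏ l ∈ Finset.univ.erase k, xs (g l) := by
  unfold Mmat
  rw [Matrix.sub_mulVec, Pi.sub_apply]
  congr 1
  · rw [Matrix.smul_mulVec, Matrix.smul_mulVec, Matrix.diagonal_pow]
    simp [Matrix.mulVec_diagonal, mul_assoc]
  · have : ((∑ k : Fin (q + 1), Ak Ts xs k).mulVec xd) i
        = ∑ k : Fin (q + 1), (Ak Ts xs k).mulVec xd i := by
      simp only [Matrix.mulVec, dotProduct, Matrix.sum_apply, Finset.sum_mul]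
      exact Finset.sum_comm
    rw [this]
    simp_rw [Ak_mulVec]
    rw [Finset.sum_comm]
    refine Finset.sum_congr rfl fun g _ => ?_
    rw [Finset.mul_sum]

/-- For a dual tensor A = A_s + A_d ε of order m = q+2, dual number
λ = λ_s + λ_d ε and dual vector x = x_s + x_d ε: A x^{m−1} = λ x^{[m−1]} iff
A_s x_s^{m−1} = λ_s x_s^{[m−1]} and M x_d = (A_d − λ_d I) x_s^{m−1}, with M as in
Theorem 3.1. -/
theorem stmt8 {n q : ℕ} (Ts Td : (Fin (q + 2) → Fin n) → ℝ)
    (ls ld : ℝ) (xs xd : Fin n → ℝ) :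
    (tapply (fun f => (inl (Ts f) + inr (Td f) : DualNumber ℝ))
        (fun i => inl (xs i) + inr (xd i)) =
      fun i => (inl ls + inr ld) * (inl (xs i) + inr (xd i)) ^ (q + 1))
    ↔ ((tapply Ts xs = fun i => ls * xs i ^ (q + 1)) ∧
        (Mmat Ts xs ls).mulVec xd = fun i => tapply Td xs i - ld * xs i ^ (q + 1)) := by
  have key : ∀ i : Fin n,
      tapply (fun f => (inl (Ts f) + inr (Td f) : DualNumber ℝ))
        (fun j => inl (xs j) + inr (xd j)) i
      = inl (tapply Ts xs i)
        + inr (tapply Td xs i + ∑ g : Fin (q + 1) → Fin n,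
            Ts (Fin.cons i g) * ∑ k, xd (g k) * ∏ l ∈ Finset.univ.erase k, xs (g l)) := by
    intro i
    unfold tapply
    simp_rw [dual_prod, dual_mul]
    rw [Finset.sum_add_distrib, ← inl_sum, ← inr_sum]
    refine (dual_eq _ _ _ _).mpr ⟨rfl, ?_⟩
    rw [Finset.sum_add_distrib, add_comm]
    congr 1
    exact Finset.sum_congr rfl fun g _ => mul_comm _ _
  have rhs : ∀ i : Fin n,
      ((inl ls + inr ld) * (inl (xs i) + inr (xd i)) ^ (q + 1) : DualNumber ℝ)
        = inl (ls * xs i ^ (q + 1))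
          + inr (ls * (((q : ℝ) + 1) * xs i ^ q * xd i) + xs i ^ (q + 1) * ld) := by
    intro i
    rw [dual_pow, dual_mul]
  rw [funext_iff]
  simp_rw [key, rhs, dual_eq]
  rw [forall_and]
  constructor
  · rintro ⟨h1, h2⟩
    refine ⟨funext h1, funext fun i => ?_⟩
    rw [Mmat_mulVec]
    have := h2 i
    linarith
  · rintro ⟨h1, h2⟩
    refine ⟨fun i => congrFun h1 i, fun i => ?_⟩
    have := congrFun h2 i
    rw [Mmat_mulVec] at this
    linarith
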